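/- Let D and E be finite sets with |D|, |E| ≥ 2 and let P : D × E → {0,1} be a binary predicate. Suppose there exist two-element subsets B ⊆ D and C ⊆ E such that P|_{B×C} is a singleton. Then for every n ≥ 1 the following two-sorted CSP(P) instance I has 2n variables and n² constraints and the property that for every 0 < ε < 1 every ε-sparsifier of I contains all n² constraints: the variable set is X ⊔ Y with |X| = |Y| = n, the scope set is all n² pairs (x, y) with x ∈ X, y ∈ Y, and the weights are arbitrary positive reals. -/
import Mathlib


/-- Extension of a two-sorted predicate `P : D × E → {0,1}` to the union
domain `D ⊕ E`: it evaluates `P` on pairs whose first component is a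
`D`-label and second component is an `E`-label, and is `0` elsewhere. -/
def pext {D E : Type*} (P : D → E → Bool) : D ⊕ E → D ⊕ E → Bool
  | Sum.inl d, Sum.inr e => P d e
  | _, _ => false

/-- The value of a binary CSP instance with predicate `P`, scope set `S`,
weights `w`, under assignment `A`. -/
def cspVal {W D : Type*} (P : D → D → Bool) (S : Finset (W × W)) (w : W × W → ℝ)
    (A : W → D) : ℝ :=
  ∑ e ∈ S, w e * (if P (A e.1) (A e.2) then 1 else 0)

/-- if `P : D × E → {0,1}` restricted to some `B × C` with
`|B| = |C| = 2` is a singleton, then the two-sorted complete bipartite instance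
on `X ⊔ Y` with `|X| = |Y| = n` has `2n` variables and `n²` constraints, and
every ε-sparsifier of it must keep all `n²` constraints. -/
theorem stmt6 {D E : Type} [Fintype D] [DecidableEq D] [Fintype E] [DecidableEq E]
    (hD : 2 ≤ Fintype.card D) (hE : 2 ≤ Fintype.card E)
    (P : D → E → Bool)
    (B : Finset D) (C : Finset E) (hB : B.card = 2) (hC : C.card = 2)
    (hsing : ∃! p : D × E, p.1 ∈ B ∧ p.2 ∈ C ∧ P p.1 p.2 = true)
    (n : ℕ) (hn : 1 ≤ n)
    (S : Finset ((Fin n ⊕ Fin n) × (Fin n ⊕ Fin n)))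
    (hS : S = (Finset.univ : Finset (Fin n × Fin n)).image
      (fun p => (Sum.inl p.1, Sum.inr p.2)))
    (w : (Fin n ⊕ Fin n) × (Fin n ⊕ Fin n) → ℝ)
    (hw : ∀ e ∈ S, 0 < w e) :
    Fintype.card (Fin n ⊕ Fin n) = 2 * n ∧ S.card = n ^ 2 ∧
    ∀ ε : ℝ, 0 < ε → ε < 1 →
      ∀ (S' : Finset ((Fin n ⊕ Fin n) × (Fin n ⊕ Fin n)))
        (w' : (Fin n ⊕ Fin n) × (Fin n ⊕ Fin n) → ℝ),
        S' ⊆ S → (∀ e ∈ S', 0 < w' e) →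
        (∀ A : (Fin n ⊕ Fin n) → D ⊕ E,
          (∀ e ∈ S, (∃ d, A e.1 = Sum.inl d) ∧ (∃ x, A e.2 = Sum.inr x)) →
          (1 - ε) * cspVal (pext P) S w A ≤ cspVal (pext P) S' w' A ∧
          cspVal (pext P) S' w' A ≤ (1 + ε) * cspVal (pext P) S w A) →
        S' = S := by
  obtain ⟨⟨b₀, c₀⟩, ⟨hb₀, hc₀, hP₀⟩, huniq⟩ := hsing
  have hinj : ∀ p ∈ (Finset.univ : Finset (Fin n × Fin n)),
      ∀ q ∈ (Finset.univ : Finset (Fin n × Fin n)),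
      (fun p : Fin n × Fin n => ((Sum.inl p.1 : Fin n ⊕ Fin n),
        (Sum.inr p.2 : Fin n ⊕ Fin n))) p =
      (fun p : Fin n × Fin n => ((Sum.inl p.1 : Fin n ⊕ Fin n),
        (Sum.inr p.2 : Fin n ⊕ Fin n))) q → p = q := by
    intro p _ q _ h
    simp only [Prod.mk.injEq, Sum.inl.injEq, Sum.inr.injEq] at h
    exact Prod.ext h.1 h.2
  refine ⟨by simp [two_mul], ?_, ?_⟩
  · rw [hS, Finset.card_image_of_injOn hinj]
    simp [sq]
  · intro ε hε hε1 S' w' hsub hw' hspars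
    by_contra hne
    obtain ⟨e, heS, heS'⟩ := Finset.exists_of_ssubset (hsub.ssubset_of_ne hne)
    have heS2 := heS
    rw [hS] at heS2
    simp only [Finset.mem_image, Finset.mem_univ, true_and] at heS2
    obtain ⟨⟨i, j⟩, rfl⟩ := heS2
    obtain ⟨b₁, hb₁, hbne⟩ := Finset.exists_mem_ne (s := B) (by omega) b₀
    obtain ⟨c₁, hc₁, hcne⟩ := Finset.exists_mem_ne (s := C) (by omega) c₀
    have hPf : ∀ b ∈ B, ∀ c ∈ C, (b, c) ≠ (b₀, c₀) → P b c = false := by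
      intro b hb c hc hne2
      by_contra h
      rw [Bool.not_eq_false] at h
      exact hne2 (huniq (b, c) ⟨hb, hc, h⟩)
    set A : (Fin n ⊕ Fin n) → D ⊕ E :=
      Sum.elim (fun k => Sum.inl (if k = i then b₀ else b₁))
               (fun k => Sum.inr (if k = j then c₀ else c₁)) with hA
    have hkey : ∀ k l : Fin n, (k, l) ≠ (i, j) →
        pext P (A (Sum.inl k)) (A (Sum.inr l)) = false := by
      intro k l hkl
      simp only [hA, Sum.elim_inl, Sum.elim_inr]
      show P _ _ = false
      by_cases hk : k = i
      · have hl : l ≠ j := fun h => hkl (by rw [hk, h])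
        refine hPf _ (by simp [hk, hb₀]) _ (by simp [hl, hc₁]) ?_
        simp [hl, Prod.mk.injEq]
        intro _
        exact hcne
      · refine hPf _ (by simp [hk, hb₁]) _ (by split <;> [exact hc₀; exact hc₁]) ?_
        simp [hk, Prod.mk.injEq]
        intro h
        exact absurd h hbne
    have hAvalid : ∀ e ∈ S, (∃ d, A e.1 = Sum.inl d) ∧ (∃ x, A e.2 = Sum.inr x) := by
      intro e he
      rw [hS] at he
      simp only [Finset.mem_image, Finset.mem_univ, true_and] at he
      obtain ⟨⟨k, l⟩, rfl⟩ := he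
      exact ⟨⟨_, rfl⟩, ⟨_, rfl⟩⟩
    have hval : cspVal (pext P) S w A = w (Sum.inl i, Sum.inr j) := by
      rw [hS]
      unfold cspVal
      rw [Finset.sum_image hinj]
      rw [Finset.sum_eq_single (i, j)]
      · have : pext P (A (Sum.inl i)) (A (Sum.inr j)) = true := by
          simp only [hA, Sum.elim_inl, Sum.elim_inr, if_pos rfl]
          exact hP₀
        rw [this]
        simp
      · intro p _ hp
        rw [hkey p.1 p.2 (by simpa using hp)]
        simp
      · simp
    have hval' : cspVal (pext P) S' w' A = 0 := by
      unfold cspVal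
      apply Finset.sum_eq_zero
      intro e he
      have heS3 := hsub he
      rw [hS] at heS3
      simp only [Finset.mem_image, Finset.mem_univ, true_and] at heS3
      obtain ⟨⟨k, l⟩, rfl⟩ := heS3
      have hkl : (k, l) ≠ (i, j) := by
        intro h
        cases h
        exact heS' he
      rw [hkey k l hkl]
      simp
    obtain ⟨h1, _⟩ := hspars A hAvalid
    rw [hval, hval'] at h1
    have hwpos := hw _ heS
    nlinarith
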